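/- arXiv:2501.00123 — 8 statements merged into one kernel-verified Lean document; each statement's English description precedes it below -/
import Mathlib

section
/- In any loop L, if an element c lies in the commutative center (i.e., commutes with all elements) and belongs to any two of the three one-sided nuclei (left, middle, right), then c lies in the center of L. -/
universe u

class Loop (L : Type u) extends Mul L, One L where
  ldiv : L → L → L
  rdiv : L → L → L
  mul_ldiv : ∀ a b : L, a * ldiv a b = b
  ldiv_mul : ∀ a b : L, ldiv a (a * b) = b
  rdiv_mul : ∀ a b : L, rdiv b a * a = b
  mul_rdiv : ∀ a b : L, rdiv (b * a) a = b
  one_mul : ∀ a : L, 1 * a = a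
  mul_one : ∀ a : L, a * 1 = a

section Magma
variable {M : Type u} (mul : M → M → M)

/-- Left nucleus of a magma. -/
def leftNucS : Set M := {a | ∀ x y, mul (mul a x) y = mul a (mul x y)}
/-- Middle nucleus of a magma. -/
def midNucS : Set M := {a | ∀ x y, mul (mul x a) y = mul x (mul a y)}
/-- Right nucleus of a magma. -/
def rightNucS : Set M := {a | ∀ x y, mul (mul x y) a = mul x (mul y a)}
/-- Nucleus of a magma. -/
def nucS : Set M := leftNucS mul ∩ midNucS mul ∩ rightNucS mul
/-- Commutant (commutative center) of a magma. -/
def commutantS : Set M := {a | ∀ x, mul a x = mul x a}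
/-- Center of a magma: the commutant intersected with the nucleus. -/
def centerS : Set M := commutantS mul ∩ nucS mul
end Magma

namespace Loop
variable {L : Type u} [Loop L]

/-- The left inverse `a^λ`, satisfying `a^λ * a = 1`. -/
def linv (a : L) : L := Loop.rdiv 1 a
/-- The right inverse `a^ρ`, satisfying `a * a^ρ = 1`. -/
def rinv (a : L) : L := Loop.ldiv a 1
/-- The commutator `[a,b]`, defined by `a*b = (b*a)*[a,b]`. -/
def comm (a b : L) : L := Loop.ldiv (b*a) (a*b)
/-- The associator `[a,b,c]`, defined by `(a*b)*c = (a*(b*c))*[a,b,c]`. -/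
def assoc (a b c : L) : L := Loop.ldiv (a*(b*c)) ((a*b)*c)

end Loop

/-- The nucleus of a loop. -/
abbrev LNuc (L : Type u) [Loop L] : Set L := nucS (fun x y : L => x * y)
/-- The commutant of a loop. -/
abbrev LCommutant (L : Type u) [Loop L] : Set L := commutantS (fun x y : L => x * y)
/-- The center of a loop. -/
abbrev LCenter (L : Type u) [Loop L] : Set L := centerS (fun x y : L => x * y)

/-- In any loop, an element of the commutant belonging to any two of the
three one-sided nuclei lies in the center. -/
theorem stmt0 {L : Type u} [Loop L] (c : L) (hc : c ∈ LCommutant L)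
    (h2 : (c ∈ leftNucS (fun x y : L => x * y) ∧ c ∈ midNucS (fun x y : L => x * y)) ∨
          (c ∈ leftNucS (fun x y : L => x * y) ∧ c ∈ rightNucS (fun x y : L => x * y)) ∨
          (c ∈ midNucS (fun x y : L => x * y) ∧ c ∈ rightNucS (fun x y : L => x * y))) :
    c ∈ LCenter L := by
  simp only [LCenter, centerS, nucS, LCommutant, commutantS, leftNucS, midNucS, rightNucS,
    Set.mem_inter_iff, Set.mem_setOf_eq] at *
  rcases h2 with ⟨hl, hm⟩ | ⟨hl, hr⟩ | ⟨hm, hr⟩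
  · refine ⟨hc, ⟨hl, hm⟩, fun x y => ?_⟩
    calc (x*y)*c = c*(x*y) := (hc _).symm
    _ = (c*x)*y := (hl x y).symm
    _ = (x*c)*y := by rw [hc]
    _ = x*(c*y) := hm x y
    _ = x*(y*c) := by rw [hc]
  · refine ⟨hc, ⟨hl, fun x y => ?_⟩, hr⟩
    calc (x*c)*y = (c*x)*y := by rw [hc]
    _ = c*(x*y) := hl x y
    _ = (x*y)*c := hc _
    _ = x*(y*c) := hr x y
    _ = x*(c*y) := by rw [hc]
  · refine ⟨hc, ⟨fun x y => ?_, hm⟩, hr⟩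
    calc (c*x)*y = (x*c)*y := by rw [hc]
    _ = x*(c*y) := hm x y
    _ = x*(y*c) := by rw [hc]
    _ = (x*y)*c := (hr x y).symm
    _ = c*(x*y) := (hc _).symm
end

section
/- In any central-by-abelian loop, the identity [a,b,c][c,b,a] = [a,b][a,bc]^{-1}[ab,c][b,c]^{-1} holds for all a,b,c. -/
universe u

section CBA
variable {L : Type u} [Loop L]

lemma lcancel {a x y : L} (h : a * x = a * y) : x = y := by
  have := congrArg (Loop.ldiv a) h
  simpa [Loop.ldiv_mul] using this

lemma rcancel {a x y : L} (h : x * a = y * a) : x = y := by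
  have := congrArg (fun t => Loop.rdiv t a) h
  simpa [Loop.mul_rdiv] using this

lemma cz {z : L} (hz : z ∈ LCenter L) (x : L) : z * x = x * z := hz.1 x
lemma lnz {z : L} (hz : z ∈ LCenter L) (x y : L) : (z * x) * y = z * (x * y) := hz.2.1.1 x y
lemma mnz {z : L} (hz : z ∈ LCenter L) (x y : L) : (x * z) * y = x * (z * y) := hz.2.1.2 x y
lemma rnz {z : L} (hz : z ∈ LCenter L) (x y : L) : (x * y) * z = x * (y * z) := hz.2.2 x y

lemma mul_rinv (z : L) : z * Loop.rinv z = 1 := Loop.mul_ldiv z 1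

lemma rinv_mul {z : L} (hz : z ∈ LCenter L) : Loop.rinv z * z = 1 := by
  rw [← cz hz, mul_rinv]

/-- Middle-nucleus property for the right inverse of a central element. -/
lemma mnz_rinv {z : L} (hz : z ∈ LCenter L) (x y : L) :
    (x * Loop.rinv z) * y = x * (Loop.rinv z * y) := by
  apply lcancel (a := z)
  have h1 : z * ((x * Loop.rinv z) * y) = x * y := by
    calc z * ((x * Loop.rinv z) * y) = (z * (x * Loop.rinv z)) * y :=
          (lnz hz (x * Loop.rinv z) y).symm
      _ = ((z * x) * Loop.rinv z) * y := by rw [lnz hz x (Loop.rinv z)]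
      _ = ((x * z) * Loop.rinv z) * y := by rw [cz hz x]
      _ = (x * (z * Loop.rinv z)) * y := by rw [mnz hz x (Loop.rinv z)]
      _ = x * y := by rw [mul_rinv, Loop.mul_one]
  have h2 : z * (x * (Loop.rinv z * y)) = x * y := by
    calc z * (x * (Loop.rinv z * y)) = (z * x) * (Loop.rinv z * y) :=
          (lnz hz x (Loop.rinv z * y)).symm
      _ = (x * z) * (Loop.rinv z * y) := by rw [cz hz x]
      _ = x * (z * (Loop.rinv z * y)) := mnz hz x (Loop.rinv z * y)
      _ = x * ((z * Loop.rinv z) * y) := by rw [lnz hz (Loop.rinv z) y]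
      _ = x * y := by rw [mul_rinv, Loop.one_mul]
  exact h1.trans h2.symm

/-- Defining equation of the commutator. -/
lemma comm_eq (a b : L) : (b * a) * Loop.comm a b = a * b := Loop.mul_ldiv _ _

/-- Defining equation of the associator. -/
lemma assoc_eq (a b c : L) : (a * (b * c)) * Loop.assoc a b c = (a * b) * c :=
  Loop.mul_ldiv _ _

end CBA

/-- In any central-by-abelian loop,
`[a,b,c][c,b,a] = [a,b][a,bc]⁻¹[ab,c][b,c]⁻¹`. -/
theorem stmt2 {L : Type u} [Loop L]
    (hcomm : ∀ a b : L, Loop.comm a b ∈ LCenter L)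
    (hassoc : ∀ a b c : L, Loop.assoc a b c ∈ LCenter L)
    (a b c : L) :
    Loop.assoc a b c * Loop.assoc c b a =
      ((Loop.comm a b * Loop.rinv (Loop.comm a (b*c))) * Loop.comm (a*b) c) *
        Loop.rinv (Loop.comm b c) := by

  set A := Loop.assoc a b c with hA
  set A' := Loop.assoc c b a with hA'
  set Kab := Loop.comm a b with hKab
  set K1 := Loop.comm b c with hK1
  set K2 := Loop.comm a (b*c) with hK2
  set K3 := Loop.comm (a*b) c with hK3
  have cA : A ∈ LCenter L := hassoc a b c
  have cA' : A' ∈ LCenter L := hassoc c b a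
  have cKab : Kab ∈ LCenter L := hcomm a b
  have cK1 : K1 ∈ LCenter L := hcomm b c
  have cK2 : K2 ∈ LCenter L := hcomm a (b*c)
  have cK3 : K3 ∈ LCenter L := hcomm (a*b) c
  -- Route 2: (a*b)*c = (c*(b*a)) * (Kab * K3)
  have route2 : (a*b)*c = (c*(b*a)) * (Kab * K3) := by
    calc (a*b)*c = (c*(a*b)) * K3 := (comm_eq (a*b) c).symm
      _ = (c*((b*a)*Kab)) * K3 := by rw [comm_eq a b]
      _ = ((c*(b*a))*Kab) * K3 := by rw [rnz cKab c (b*a)]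
      _ = (c*(b*a)) * (Kab * K3) := mnz cKab (c*(b*a)) K3
  -- Route 1: (a*b)*c = (c*(b*a)) * (A' * (K1 * (K2 * A)))
  have route1 : (a*b)*c = (c*(b*a)) * (A' * (K1 * (K2 * A))) := by
    have e1 : (b*c)*a = ((c*b)*a) * K1 := by
      calc (b*c)*a = ((c*b)*K1)*a := by rw [comm_eq b c]
        _ = (c*b)*(K1*a) := mnz cK1 (c*b) a
        _ = (c*b)*(a*K1) := by rw [cz cK1 a]
        _ = ((c*b)*a)*K1 := (rnz cK1 (c*b) a).symm
    calc (a*b)*c = (a*(b*c)) * A := (assoc_eq a b c).symm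
      _ = (((b*c)*a)*K2) * A := by rw [comm_eq a (b*c)]
      _ = ((((c*b)*a) * K1)*K2) * A := by rw [e1]
      _ = (((c*(b*a)) * A' * K1)*K2) * A := by rw [← assoc_eq c b a]
      _ = (((c*(b*a)) * A' * K1)) * (K2 * A) := mnz cK2 _ A
      _ = ((c*(b*a)) * A') * (K1 * (K2*A)) := mnz cK1 _ _
      _ = (c*(b*a)) * (A' * (K1 * (K2*A))) := mnz cA' _ _
  -- cancel to get the central relation
  have key : A' * (K1 * (K2 * A)) = Kab * K3 :=
    lcancel (route1.symm.trans route2)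
  -- rewrite the left side of `key`
  have key2 : (A * A') * (K1 * K2) = Kab * K3 := by
    calc (A * A') * (K1 * K2) = (A' * A) * (K1 * K2) := by rw [cz cA' A]
      _ = A' * (A * (K1 * K2)) := lnz cA' A (K1*K2)
      _ = A' * ((A * K1) * K2) := by rw [rnz cK2 A K1]
      _ = A' * ((K1 * A) * K2) := by rw [cz cK1 A]
      _ = A' * (K1 * (A * K2)) := by rw [lnz cK1 A K2]
      _ = A' * (K1 * (K2 * A)) := by rw [cz cK2 A]
      _ = Kab * K3 := key
  -- show the RHS of the goal times (K1*K2) is also Kab*K3, then cancel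
  apply rcancel (a := K1 * K2)
  rw [key2]; symm
  calc (((Kab * Loop.rinv K2) * K3) * Loop.rinv K1) * (K1 * K2)
      = ((Kab * Loop.rinv K2) * K3) * (Loop.rinv K1 * (K1 * K2)) :=
        mnz_rinv cK1 _ _
    _ = ((Kab * Loop.rinv K2) * K3) * ((Loop.rinv K1 * K1) * K2) := by
        rw [mnz cK1 (Loop.rinv K1) K2]
    _ = ((Kab * Loop.rinv K2) * K3) * K2 := by rw [rinv_mul cK1, Loop.one_mul]
    _ = (Kab * Loop.rinv K2) * (K3 * K2) := mnz cK3 _ K2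
    _ = (Kab * Loop.rinv K2) * (K2 * K3) := by rw [cz cK3 K2]
    _ = ((Kab * Loop.rinv K2) * K2) * K3 := (mnz cK2 _ K3).symm
    _ = (Kab * (Loop.rinv K2 * K2)) * K3 := by rw [mnz_rinv cK2 Kab K2]
    _ = Kab * K3 := by rw [rinv_mul cK2, Loop.mul_one]
end

section
/- Let * be a normal involution on a loop L, i.e., ν(x) = x^*x is central for all x. Then x^* = ν(x)x^λ = ν(x^*)x^ρ for all x ∈ L, where x^λ and x^ρ are the left and right inverses. Moreover, [x,x^*] = 1 for every x if and only if ν(x^*) = ν(x) for every x, if and only if the inverse is well-defined (x^λ = x^ρ for all x). -/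
universe u

lemma loop_cancel_left {L : Type u} [Loop L] {a b c : L} (h : a * b = a * c) : b = c := by
  have := congrArg (fun z => Loop.ldiv a z) h
  simpa [Loop.ldiv_mul] using this

lemma loop_cancel_right {L : Type u} [Loop L] {a b c : L} (h : a * c = b * c) : a = b := by
  have := congrArg (fun z => Loop.rdiv z c) h
  simpa [Loop.mul_rdiv] using this

/-- For a normal involution (`ν(x) = x^*x` central): `x^* = ν(x)x^λ = ν(x^*)x^ρ`;
moreover `x` commutes with `x^*` for all `x` iff `ν(x^*) = ν(x)` for all `x`,
iff the inverse is well-defined. -/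
theorem stmt8 {L : Type u} [Loop L] (star : L → L)
    (hstar2 : ∀ a : L, star (star a) = a)
    (hanti : ∀ a b : L, star (a * b) = star b * star a)
    (hnorm : ∀ x : L, star x * x ∈ LCenter L) :
    (∀ x : L, star x = (star x * x) * Loop.linv x ∧
      star x = (star (star x) * star x) * Loop.rinv x) ∧
    ((∀ x : L, x * star x = star x * x) ↔
      (∀ x : L, star (star x) * star x = star x * x)) ∧
    ((∀ x : L, star (star x) * star x = star x * x) ↔
      (∀ x : L, Loop.linv x = Loop.rinv x)) := by

  have key : ∀ x : L, star x = (star x * x) * Loop.linv x ∧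
      star x = (star (star x) * star x) * Loop.rinv x := by
    intro x
    obtain ⟨hc, ⟨hl, hm⟩, hr⟩ := hnorm x
    obtain ⟨hc', ⟨hl', hm'⟩, hr'⟩ := hnorm (star x)
    constructor
    · apply loop_cancel_right (c := x)
      have : ((star x * x) * Loop.linv x) * x = (star x * x) * (Loop.linv x * x) := hl _ _
      rw [this, Loop.linv, Loop.rdiv_mul, Loop.mul_one]
    · apply loop_cancel_left (a := x)
      have h1 : (x * (star (star x) * star x)) * Loop.rinv x
          = x * ((star (star x) * star x) * Loop.rinv x) := hm' _ _
      have hc2 : x * (star (star x) * star x) = (star (star x) * star x) * x := (hc' x).symm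
      have hl2 : ((star (star x) * star x) * x) * Loop.rinv x
          = (star (star x) * star x) * (x * Loop.rinv x) := hl' _ _
      rw [← h1, hc2, hl2, Loop.rinv, Loop.mul_ldiv, Loop.mul_one, hstar2]
  refine ⟨key, ?_, ?_⟩
  · constructor
    · intro h x; rw [hstar2]; exact h x
    · intro h x; have := h x; rwa [hstar2] at this
  · constructor
    · intro h x
      have h1 := (key x).1
      have h2 := (key x).2
      rw [h x] at h2
      exact loop_cancel_left (h1.symm.trans h2)
    · intro h x
      have h1 := (key x).1
      have h2 := (key x).2
      rw [h x] at h1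
      exact loop_cancel_right (h2.symm.trans h1)
end

section
/- Let (L,*) be a loop with involution, γ, ε central elements of L. The formula (aj)^* = (εa)j extends the involution * from L to an involution of the Cayley-Dickson double D(L,*,γ) if and only if ε² = 1 and (εγ)^* = εγ. -/
universe u

/-- Multiplication of the Cayley–Dickson double `D(L,*,γ) = L ∪ Lj`,
encoded on `L × Bool` with `(a, false) = a` and `(a, true) = a·j`. -/
def CDmul {L : Type u} [Loop L] (star : L → L) (γ : L) :
    L × Bool → L × Bool → L × Bool
  | (a, false), (b, false) => (a * b, false)
  | (a, false), (b, true)  => (b * a, true)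
  | (a, true),  (b, false) => (a * star b, true)
  | (a, true),  (b, true)  => (γ * (star b * a), false)

/-- Extension of the involution `(a·j)^* = (ε·a)·j` used in the double. -/
def CDstar {L : Type u} [Loop L] (star : L → L) (ε : L) : L × Bool → L × Bool
  | (a, false) => (star a, false)
  | (a, true)  => (ε * a, true)

section Aux
variable {L : Type u} [Loop L]

lemma star_one_aux (star : L → L) (hstar2 : ∀ a : L, star (star a) = a)
    (hanti : ∀ a b : L, star (a * b) = star b * star a) : star 1 = 1 := by
  have h : star 1 * star 1 = star 1 * 1 := by
    rw [Loop.mul_one, ← hanti, Loop.one_mul]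
  have h2 := congrArg (Loop.ldiv (star 1)) h
  rwa [Loop.ldiv_mul, Loop.ldiv_mul] at h2

lemma star_central_aux (star : L → L) (hstar2 : ∀ a : L, star (star a) = a)
    (hanti : ∀ a b : L, star (a * b) = star b * star a)
    {z : L} (hc : ∀ x : L, z * x = x * z)
    (hl : ∀ x y : L, (z * x) * y = z * (x * y))
    (hm : ∀ x y : L, (x * z) * y = x * (z * y))
    (hr : ∀ x y : L, (x * y) * z = x * (y * z)) :
    (∀ x : L, star z * x = x * star z) ∧
    (∀ x y : L, (star z * x) * y = star z * (x * y)) ∧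
    (∀ x y : L, (x * star z) * y = x * (star z * y)) ∧
    (∀ x y : L, (x * y) * star z = x * (y * star z)) := by
  have inj : ∀ a b : L, star a = star b → a = b := fun a b h => by
    rw [← hstar2 a, h, hstar2]
  refine ⟨fun x => inj _ _ ?_, fun x y => inj _ _ ?_, fun x y => inj _ _ ?_,
    fun x y => inj _ _ ?_⟩
  · simp only [hanti, hstar2]
    exact (hc _).symm
  · simp only [hanti, hstar2]
    exact (hr _ _).symm
  · simp only [hanti, hstar2]
    exact (hm _ _).symm
  · simp only [hanti, hstar2]
    exact (hl _ _).symm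

lemma mul_central_aux {y z : L}
    (hyc : ∀ x : L, y * x = x * y)
    (hyl : ∀ a b : L, (y * a) * b = y * (a * b))
    (hym : ∀ a b : L, (a * y) * b = a * (y * b))
    (hyr : ∀ a b : L, (a * b) * y = a * (b * y))
    (hzc : ∀ x : L, z * x = x * z)
    (hzl : ∀ a b : L, (z * a) * b = z * (a * b))
    (hzm : ∀ a b : L, (a * z) * b = a * (z * b))
    (hzr : ∀ a b : L, (a * b) * z = a * (b * z)) :
    (∀ x : L, (y * z) * x = x * (y * z)) ∧
    (∀ a b : L, ((y * z) * a) * b = (y * z) * (a * b)) ∧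
    (∀ a b : L, (a * (y * z)) * b = a * ((y * z) * b)) ∧
    (∀ a b : L, (a * b) * (y * z) = a * (b * (y * z))) := by
  refine ⟨fun x => ?_, fun a b => ?_, fun a b => ?_, fun a b => ?_⟩
  · calc (y * z) * x = y * (z * x) := hyl z x
      _ = y * (x * z) := by rw [hzc x]
      _ = (y * x) * z := (hyl x z).symm
      _ = (x * y) * z := by rw [hyc x]
      _ = x * (y * z) := hym x z
  · calc ((y * z) * a) * b = (y * (z * a)) * b := by rw [hyl]
      _ = y * ((z * a) * b) := hyl _ _
      _ = y * (z * (a * b)) := by rw [hzl]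
      _ = (y * z) * (a * b) := (hyl _ _).symm
  · calc (a * (y * z)) * b = ((a * y) * z) * b := by rw [hym]
      _ = (a * y) * (z * b) := hzm _ _
      _ = a * (y * (z * b)) := hym _ _
      _ = a * ((y * z) * b) := by rw [hyl]
  · calc (a * b) * (y * z) = ((a * b) * y) * z := (hym _ _).symm
      _ = (a * (b * y)) * z := by rw [hyr]
      _ = a * ((b * y) * z) := hzr _ _
      _ = a * (b * (y * z)) := by rw [hym]

end Aux

/-- `(aj)^* = (εa)j` extends the involution from `L` to `D(L,*,γ)` iff
`ε² = 1` and `(εγ)^* = εγ`. -/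
theorem stmt11 {L : Type u} [Loop L] (star : L → L)
    (hstar2 : ∀ a : L, star (star a) = a)
    (hanti : ∀ a b : L, star (a * b) = star b * star a)
    (γ ε : L) (hγ : γ ∈ LCenter L) (hε : ε ∈ LCenter L) :
    ((∀ x : L × Bool, CDstar star ε (CDstar star ε x) = x) ∧
     (∀ x y : L × Bool, CDstar star ε (CDmul star γ x y) =
        CDmul star γ (CDstar star ε y) (CDstar star ε x))) ↔
      (ε * ε = 1 ∧ star (ε * γ) = ε * γ) := by
  obtain ⟨hγc0, ⟨hγl0, hγm0⟩, hγr0⟩ := hγ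
  obtain ⟨hεc0, ⟨hεl0, hεm0⟩, hεr0⟩ := hε
  have hγc : ∀ x : L, γ * x = x * γ := fun x => hγc0 x
  have hγl : ∀ x y : L, (γ * x) * y = γ * (x * y) := fun x y => hγl0 x y
  have hγm : ∀ x y : L, (x * γ) * y = x * (γ * y) := fun x y => hγm0 x y
  have hγr : ∀ x y : L, (x * y) * γ = x * (y * γ) := fun x y => hγr0 x y
  have hεc : ∀ x : L, ε * x = x * ε := fun x => hεc0 x
  have hεl : ∀ x y : L, (ε * x) * y = ε * (x * y) := fun x y => hεl0 x y
  have hεm : ∀ x y : L, (x * ε) * y = x * (ε * y) := fun x y => hεm0 x y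
  have hεr : ∀ x y : L, (x * y) * ε = x * (y * ε) := fun x y => hεr0 x y
  have s1 : star 1 = 1 := star_one_aux star hstar2 hanti
  constructor
  · rintro ⟨hinv, hmul⟩
    have h1 := hinv (1, true)
    simp only [CDstar, Prod.mk.injEq] at h1
    have he2 : ε * ε = 1 := by rw [← Loop.mul_one (ε * ε), hεl]; exact h1.1
    refine ⟨he2, ?_⟩
    have h2 := hmul (ε, true) (1, true)
    simp only [CDstar, CDmul, Prod.mk.injEq] at h2
    rw [s1, Loop.one_mul, Loop.mul_one, he2, s1, Loop.one_mul] at h2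
    rw [hεc γ]
    exact h2.1
  · rintro ⟨he2, hsg⟩
    obtain ⟨hsεc, hsεl, hsεm, hsεr⟩ :=
      star_central_aux star hstar2 hanti hεc hεl hεm hεr
    obtain ⟨hcc, hcl, hcm, hcr⟩ :=
      mul_central_aux hsεc hsεl hsεm hsεr hεc hεl hεm hεr
    set c := star ε * ε with hc_def
    have hss : star ε * star ε = 1 := by rw [← hanti, he2, s1]
    have hccone : c * c = 1 := by
      calc (star ε * ε) * (star ε * ε) = star ε * (ε * (star ε * ε)) := hsεl _ _
        _ = star ε * ((ε * star ε) * ε) := by rw [hεl]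
        _ = star ε * ((star ε * ε) * ε) := by rw [hεc (star ε)]
        _ = star ε * (star ε * (ε * ε)) := by rw [hsεl]
        _ = star ε * (star ε * 1) := by rw [he2]
        _ = star ε * star ε := by rw [Loop.mul_one]
        _ = 1 := hss
    have hA : star γ * c = γ := by
      have h3 : star γ * star ε = ε * γ := by rw [← hanti]; exact hsg
      calc star γ * (star ε * ε) = (star γ * star ε) * ε := (hεr _ _).symm
        _ = (ε * γ) * ε := by rw [h3]
        _ = ε * (γ * ε) := hεl _ _
        _ = ε * (ε * γ) := by rw [← hεc γ]
        _ = (ε * ε) * γ := (hεl _ _).symm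
        _ = 1 * γ := by rw [he2]
        _ = γ := Loop.one_mul γ
    have hstγ : star γ = γ * c := by
      have h1 : Loop.rdiv γ c = star γ := by
        conv_lhs => rw [← hA]
        exact Loop.mul_rdiv _ _
      have hγcc : (γ * c) * c = γ := by rw [hcr, hccone, Loop.mul_one]
      have h2 : Loop.rdiv γ c = γ * c := by
        conv_lhs => rw [← hγcc]
        exact Loop.mul_rdiv _ _
      rw [← h1, h2]
    constructor
    · rintro ⟨a, _ | _⟩ <;> simp only [CDstar, Prod.mk.injEq]
      · exact ⟨hstar2 a, trivial⟩
      · exact ⟨by rw [← hεl, he2, Loop.one_mul], trivial⟩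
    · rintro ⟨a, _ | _⟩ ⟨b, _ | _⟩ <;> simp only [CDstar, CDmul, Prod.mk.injEq]
      · exact ⟨hanti a b, trivial⟩
      · exact ⟨by rw [hstar2]; exact (hεl b a).symm, trivial⟩
      · exact ⟨(hεl a (star b)).symm, trivial⟩
      · refine ⟨?_, trivial⟩
        calc star (γ * (star b * a)) = star (star b * a) * star γ := hanti _ _
          _ = (star a * star (star b)) * star γ := by rw [hanti]
          _ = (star a * b) * (γ * c) := by rw [hstar2, hstγ]
          _ = ((star a * b) * γ) * c := (hcr _ _).symm
          _ = (γ * (star a * b)) * c := by rw [← hγc]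
          _ = γ * ((star a * b) * c) := hγl _ _
          _ = γ * (star a * (b * c)) := by rw [hcr]
          _ = γ * (star a * (c * b)) := by rw [hcc b]
          _ = γ * (star a * (star ε * (ε * b))) := by rw [hc_def, hsεl]
          _ = γ * ((star a * star ε) * (ε * b)) := by rw [hsεm]
          _ = γ * (star (ε * a) * (ε * b)) := by rw [← hanti]
end

section
/- Let (L,*) be a loop with involution where * is not the identity map, and γ central. Then: (1) the set of elements of D(L,*,γ) commuting with every element of L equals the commutant K(L) of L; (2) the set of elements commuting with every element of Lj equals the set of symmetric elements of L; (3) the commutant of D(L,*,γ) equals the set of symmetric elements of K(L). -/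
universe u

namespace Loop
variable {L : Type u} [Loop L]
theorem left_cancel' {a b c : L} (h : a * b = a * c) : b = c := by
  have h2 := congrArg (Loop.ldiv a) h
  rwa [Loop.ldiv_mul, Loop.ldiv_mul] at h2
end Loop

/-- For a non-identity involution: the centralizer of `L` in the double is the
commutant of `L`; the centralizer of `Lj` is the set of symmetric elements of
`L`; and the commutant of the double is the set of symmetric elements of the
commutant of `L`. -/
theorem stmt13 {L : Type u} [Loop L] (star : L → L)
    (hstar2 : ∀ a : L, star (star a) = a)
    (hanti : ∀ a b : L, star (a * b) = star b * star a)
    (γ : L) (hγ : γ ∈ LCenter L)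
    (hnid : ¬ (∀ a : L, star a = a)) :
    ({x : L × Bool | ∀ b : L, CDmul star γ x (b, false) = CDmul star γ (b, false) x}
        = {x : L × Bool | ∃ a : L, a ∈ LCommutant L ∧ x = (a, false)}) ∧
    ({x : L × Bool | ∀ b : L, CDmul star γ x (b, true) = CDmul star γ (b, true) x}
        = {x : L × Bool | ∃ a : L, star a = a ∧ x = (a, false)}) ∧
    (commutantS (CDmul star γ)
        = {x : L × Bool | ∃ a : L, a ∈ LCommutant L ∧ star a = a ∧ x = (a, false)}) := by
  have star1 : star 1 = 1 := by
    have h := hanti 1 1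
    rw [Loop.mul_one] at h
    have h2 : star (1 : L) * star 1 = star 1 * 1 := by rw [← h, Loop.mul_one]
    exact Loop.left_cancel' h2
  -- key lemma: no element a satisfies star b * a = star a * b for all b
  have key : ∀ a : L, (∀ b : L, star b * a = star a * b) → False := by
    intro a h
    have haa : star a = a := by
      have h1 := h 1
      rw [star1, Loop.one_mul, Loop.mul_one] at h1
      exact h1.symm
    apply hnid
    intro c
    calc star c = star (a * Loop.ldiv a c) := by rw [Loop.mul_ldiv]
      _ = star (Loop.ldiv a c) * star a := hanti _ _
      _ = star (Loop.ldiv a c) * a := by rw [haa]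
      _ = star a * Loop.ldiv a c := h _
      _ = a * Loop.ldiv a c := by rw [haa]
      _ = c := Loop.mul_ldiv _ _
  refine ⟨?_, ?_, ?_⟩
  · ext x
    constructor
    · intro h
      obtain ⟨a, ba⟩ := x
      cases ba with
      | false =>
        refine ⟨a, ?_, rfl⟩
        intro b
        have hb := h b
        simp only [CDmul, Prod.mk.injEq] at hb
        exact hb.1
      | true =>
        exfalso
        apply hnid
        intro b
        have hb := h b
        simp only [CDmul, Prod.mk.injEq] at hb
        exact Loop.left_cancel' hb.1
    · rintro ⟨a, hcomm, rfl⟩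
      intro b
      simp only [CDmul, Prod.mk.injEq]
      exact ⟨hcomm b, trivial⟩
  · ext x
    constructor
    · intro h
      obtain ⟨a, ba⟩ := x
      cases ba with
      | false =>
        refine ⟨a, ?_, rfl⟩
        have h1 := h 1
        simp only [CDmul, Prod.mk.injEq] at h1
        have := h1.1
        rw [Loop.one_mul, Loop.one_mul] at this
        exact this.symm
      | true =>
        exfalso
        apply key a
        intro b
        have hb := h b
        simp only [CDmul, Prod.mk.injEq] at hb
        exact Loop.left_cancel' hb.1
    · rintro ⟨a, hsym, rfl⟩
      intro b
      simp only [CDmul, Prod.mk.injEq, hsym, and_self]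
  · ext x
    constructor
    · intro h
      obtain ⟨a, ba⟩ := x
      cases ba with
      | false =>
        refine ⟨a, ?_, ?_, rfl⟩
        · intro b
          have hb := h (b, false)
          simp only [CDmul, Prod.mk.injEq] at hb
          exact hb.1
        · have h1 := h (1, true)
          simp only [CDmul, Prod.mk.injEq] at h1
          have := h1.1
          rw [Loop.one_mul, Loop.one_mul] at this
          exact this.symm
      | true =>
        exfalso
        apply key a
        intro b
        have hb := h (b, true)
        simp only [CDmul, Prod.mk.injEq] at hb
        exact Loop.left_cancel' hb.1
    · rintro ⟨a, hcomm, hsym, rfl⟩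
      rintro ⟨b, bb⟩
      cases bb with
      | false =>
        simp only [CDmul, Prod.mk.injEq]
        exact ⟨hcomm b, trivial⟩
      | true =>
        simp only [CDmul, Prod.mk.injEq, hsym, and_self]
end

section
/- Let (L,*) be a loop with involution and M = D(L,*,γ). Then every commutator of M lies in L; explicitly, [a, bj]·(ab^*) = a^*b^*, [aj, b]·(b^*a^*) = ba^*, and b^*a = (a^*b)·[aj, bj] for all a,b ∈ L. Consequently, all commutators of M are central in L if and only if * is a central involution on L. -/
universe u

section Aux
variable {L : Type u} [Loop L]

lemma mem_LCenter (z : L) :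
    z ∈ LCenter L ↔ (∀ x : L, z * x = x * z) ∧ (∀ x y : L, z * x * y = z * (x * y))
      ∧ (∀ x y : L, x * z * y = x * (z * y)) ∧ (∀ x y : L, x * y * z = x * (y * z)) := by
  constructor
  · rintro ⟨hc, ⟨hl, hm⟩, hr⟩; exact ⟨hc, hl, hm, hr⟩
  · rintro ⟨hc, hl, hm, hr⟩; exact ⟨hc, ⟨hl, hm⟩, hr⟩

lemma one_LCenter : (1 : L) ∈ LCenter L := by
  rw [mem_LCenter]
  refine ⟨fun x => ?_, fun x y => ?_, fun x y => ?_, fun x y => ?_⟩ <;>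
    simp [Loop.one_mul, Loop.mul_one]

lemma mul_LCenter {u v : L} (hu : u ∈ LCenter L) (hv : v ∈ LCenter L) :
    u * v ∈ LCenter L := by
  rw [mem_LCenter] at *
  obtain ⟨uc, ul, um, ur⟩ := hu
  obtain ⟨vc, vl, vm, vr⟩ := hv
  refine ⟨fun x => ?_, fun x y => ?_, fun x y => ?_, fun x y => ?_⟩
  · calc u * v * x = u * (v * x) := ul v x
      _ = u * (x * v) := by rw [vc x]
      _ = u * x * v := (ul x v).symm
      _ = x * u * v := by rw [uc x]
      _ = x * (u * v) := um x v
  · calc u * v * x * y = u * (v * x) * y := by rw [ul v x]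
      _ = u * (v * x * y) := ul _ y
      _ = u * (v * (x * y)) := by rw [vl x y]
      _ = u * v * (x * y) := (ul v _).symm
  · calc x * (u * v) * y = x * u * v * y := by rw [um x v]
      _ = x * u * (v * y) := vm (x*u) y
      _ = x * (u * (v * y)) := um x (v*y)
      _ = x * (u * v * y) := by rw [ul v y]
  · calc x * y * (u * v) = x * y * u * v := by rw [um (x*y) v]
      _ = x * (y * u) * v := by rw [ur x y]
      _ = x * (y * u * v) := vr x (y*u)
      _ = x * (y * (u * v)) := by rw [um y v]

lemma ldiv_LCenter {u v : L} (hu : u ∈ LCenter L) (hv : v ∈ LCenter L) :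
    Loop.ldiv u v ∈ LCenter L := by
  set w := Loop.ldiv u v with hw
  have huw : u * w = v := Loop.mul_ldiv u v
  rw [mem_LCenter] at *
  obtain ⟨uc, ul, um, ur⟩ := hu
  obtain ⟨vc, vl, vm, vr⟩ := hv
  have wc : ∀ x : L, w * x = x * w := by
    intro x
    apply lcancel (a := u)
    calc u * (w * x) = u * w * x := (ul w x).symm
      _ = v * x := by rw [huw]
      _ = x * v := vc x
      _ = x * (u * w) := by rw [huw]
      _ = x * u * w := (um x w).symm
      _ = u * x * w := by rw [uc x]
      _ = u * (x * w) := ul x w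
  have wu : w * u = v := by rw [wc u, huw]
  have wl : ∀ x y : L, w * x * y = w * (x * y) := by
    intro x y
    apply lcancel (a := u)
    calc u * (w * x * y) = u * (w * x) * y := (ul _ y).symm
      _ = u * w * x * y := by rw [ul w x]
      _ = v * x * y := by rw [huw]
      _ = v * (x * y) := vl x y
      _ = u * w * (x * y) := by rw [huw]
      _ = u * (w * (x * y)) := ul w _
  have wr : ∀ x y : L, x * y * w = x * (y * w) := by
    intro x y
    apply rcancel (a := u)
    calc x * y * w * u = x * y * (w * u) := ur (x*y) w
      _ = x * y * v := by rw [wu]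
      _ = x * (y * v) := vr x y
      _ = x * (y * (w * u)) := by rw [wu]
      _ = x * (y * w * u) := by rw [ur y w]
      _ = x * (y * w) * u := (ur x (y*w)).symm
  have wm : ∀ x y : L, x * w * y = x * (w * y) := by
    intro x y
    apply rcancel (a := u)
    calc x * w * y * u = x * w * (y * u) := ur (x*w) y
      _ = x * w * (u * y) := by rw [uc y]
      _ = x * w * u * y := (um (x*w) y).symm
      _ = x * (w * u) * y := by rw [ur x w]
      _ = x * v * y := by rw [wu]
      _ = x * (v * y) := vm x y
      _ = x * (w * u * y) := by rw [← wu]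
      _ = x * (w * (u * y)) := by rw [um w y]
      _ = x * (w * (y * u)) := by rw [uc y]
      _ = x * (w * y * u) := by rw [ur w y]
      _ = x * (w * y) * u := (ur x (w*y)).symm
  exact ⟨wc, wl, wm, wr⟩

/-- If `*` is a central involution, commutators of `L` are central. -/
lemma commL_LCenter {star : L → L}
    (hanti : ∀ a b : L, star (a * b) = star b * star a)
    (hcen : ∀ a : L, ∃ z ∈ LCenter L, star a = z * a)
    {a b k : L} (hk : b * a * k = a * b) : k ∈ LCenter L := by
  obtain ⟨za, hza, ea⟩ := hcen a
  obtain ⟨zb, hzb, eb⟩ := hcen b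
  obtain ⟨zab, hzab, eab⟩ := hcen (a * b)
  obtain ⟨ac, al, am, ar⟩ := (mem_LCenter za).mp hza
  obtain ⟨bc, bl, bm, br⟩ := (mem_LCenter zb).mp hzb
  obtain ⟨cc, cl, cm, cr⟩ := (mem_LCenter zab).mp hzab
  have key : zab * (a * b) = zb * za * (b * a) := by
    calc zab * (a * b) = star (a * b) := eab.symm
      _ = star b * star a := hanti a b
      _ = zb * b * (za * a) := by rw [ea, eb]
      _ = zb * (b * (za * a)) := bl b _
      _ = zb * (b * za * a) := by rw [am b a]
      _ = zb * (za * b * a) := by rw [ac b]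
      _ = zb * (za * (b * a)) := by rw [al b a]
      _ = zb * za * (b * a) := (bl za _).symm
  have key2 : b * a * (zab * k) = b * a * (zb * za) := by
    calc b * a * (zab * k) = b * a * zab * k := (cm (b*a) k).symm
      _ = zab * (b * a) * k := by rw [cc (b*a)]
      _ = zab * (b * a * k) := cl (b*a) k
      _ = zab * (a * b) := by rw [hk]
      _ = zb * za * (b * a) := key
      _ = b * a * (zb * za) := ((mem_LCenter _).mp (mul_LCenter hzb hza)).1 (b*a)
  have key3 : zab * k = zb * za := lcancel key2
  have hk' : k = Loop.ldiv zab (zb * za) := by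
    rw [← key3, Loop.ldiv_mul]
  rw [hk']
  exact ldiv_LCenter hzab (mul_LCenter hzb hza)

end Aux

/-- Commutators of `M = D(L,*,γ)` lie in `L` and satisfy the explicit
formulas `[a,bj]·(ab^*) = a^*b^*`, `[aj,b]·(b^*a^*) = ba^*`,
`b^*a = (a^*b)·[aj,bj]`; consequently all commutators of `M` are central in
`L` iff `*` is a central involution on `L`. -/
theorem stmt16 {L : Type u} [Loop L] (star : L → L)
    (hstar2 : ∀ a : L, star (star a) = a)
    (hanti : ∀ a b : L, star (a * b) = star b * star a)
    (γ : L) (hγ : γ ∈ LCenter L) :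
    (∀ x y : L × Bool, ∃ k : L,
        CDmul star γ (CDmul star γ y x) (k, false) = CDmul star γ x y) ∧
    (∀ a b k : L,
        CDmul star γ (CDmul star γ (b, true) (a, false)) (k, false)
          = CDmul star γ (a, false) (b, true) →
        k * (a * star b) = star a * star b) ∧
    (∀ a b k : L,
        CDmul star γ (CDmul star γ (b, false) (a, true)) (k, false)
          = CDmul star γ (a, true) (b, false) →
        k * (star b * star a) = b * star a) ∧
    (∀ a b k : L,
        CDmul star γ (CDmul star γ (b, true) (a, true)) (k, false)
          = CDmul star γ (a, true) (b, true) →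
        star b * a = (star a * b) * k) ∧
    ((∀ (x y : L × Bool) (k : L),
        CDmul star γ (CDmul star γ y x) (k, false) = CDmul star γ x y →
        k ∈ LCenter L) ↔
      (∀ a : L, ∃ z ∈ LCenter L, star a = z * a)) := by
  obtain ⟨gc, gl, gm, gr⟩ := (mem_LCenter γ).mp hγ
  refine ⟨?_, ?_, ?_, ?_, ?_⟩
  · -- every commutator lies in L
    rintro ⟨a, _ | _⟩ ⟨b, _ | _⟩
    · exact ⟨Loop.ldiv (b * a) (a * b), by simp [CDmul, Loop.mul_ldiv]⟩
    · exact ⟨star (Loop.ldiv (b * star a) (b * a)),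
        by simp [CDmul, hstar2, Loop.mul_ldiv]⟩
    · exact ⟨star (Loop.ldiv (a * b) (a * star b)),
        by simp [CDmul, hstar2, Loop.mul_ldiv]⟩
    · exact ⟨Loop.ldiv (γ * (star a * b)) (γ * (star b * a)),
        by simp [CDmul, Loop.mul_ldiv]⟩
  · -- [a, bj]·(ab^*) = a^* b^*
    intro a b k h
    simp only [CDmul, Prod.mk.injEq, and_true] at h
    have h2 : star (b * star a * star k) = star (b * a) := by rw [h]
    rw [hanti, hanti, hanti, hstar2, hstar2] at h2
    exact h2
  · -- [aj, b]·(b^*a^*) = b a^*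
    intro a b k h
    simp only [CDmul, Prod.mk.injEq, and_true] at h
    have h2 : star (a * b * star k) = star (a * star b) := by rw [h]
    rw [hanti, hanti, hanti, hstar2, hstar2] at h2
    exact h2
  · -- b^* a = (a^* b)·[aj, bj]
    intro a b k h
    simp only [CDmul, Prod.mk.injEq, and_true] at h
    have h2 : γ * (star a * b * k) = γ * (star b * a) := by
      rw [← gl, h]
    exact (lcancel h2).symm
  · constructor
    · -- commutators central → central involution
      intro h a
      set k : L := star (Loop.ldiv (star a) a) with hk
      have heq : CDmul star γ (CDmul star γ ((1 : L), true) (a, false)) (k, false)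
          = CDmul star γ (a, false) ((1 : L), true) := by
        simp [CDmul, hk, hstar2, Loop.mul_ldiv, Loop.one_mul]
      refine ⟨k, h _ _ k heq, ?_⟩
      calc star a = star (star a * Loop.ldiv (star a) a) := by rw [Loop.mul_ldiv]
        _ = star (Loop.ldiv (star a) a) * star (star a) := hanti _ _
        _ = k * a := by rw [hstar2]
    · -- central involution → commutators central
      rintro hcen ⟨a, _ | _⟩ ⟨b, _ | _⟩ k h <;>
        simp only [CDmul, Prod.mk.injEq, and_true] at h
      · exact commL_LCenter hanti hcen h
      · -- x = a, y = bj : (b·a^*)·k^* = b·a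
        obtain ⟨za, hza, ea⟩ := hcen a
        obtain ⟨ac, al, am, ar⟩ := (mem_LCenter za).mp hza
        have h2 : b * a * (za * star k) = b * a * 1 := by
          calc b * a * (za * star k) = b * a * za * star k := (am (b*a) (star k)).symm
            _ = za * (b * a) * star k := by rw [ac (b*a)]
            _ = za * (b * a) * star k := rfl
            _ = za * b * a * star k := by rw [al b a]
            _ = b * za * a * star k := by rw [ac b]
            _ = b * (za * a) * star k := by rw [am b a]
            _ = b * star a * star k := by rw [← ea]
            _ = b * a := h
            _ = b * a * 1 := (Loop.mul_one _).symm
        have h3 : star k = Loop.ldiv za 1 := by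
          have := lcancel h2
          rw [← this, Loop.ldiv_mul]
        have hsk : star k ∈ LCenter L := by
          rw [h3]; exact ldiv_LCenter hza one_LCenter
        obtain ⟨zk, hzk, ek⟩ := hcen (star k)
        have : k = zk * star k := by rw [← ek, hstar2]
        rw [this]
        exact mul_LCenter hzk hsk
      · -- x = aj, y = b : (a·b)·k^* = a·b^*
        obtain ⟨zb, hzb, eb⟩ := hcen b
        obtain ⟨bc, bl, bm, br⟩ := (mem_LCenter zb).mp hzb
        have h2 : a * b * star k = a * b * zb := by
          calc a * b * star k = a * star b := h
            _ = a * (zb * b) := by rw [eb]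
            _ = a * zb * b := (bm a b).symm
            _ = zb * a * b := by rw [bc a]
            _ = zb * (a * b) := bl a b
            _ = a * b * zb := bc (a*b)
        have h3 : star k = zb := lcancel h2
        obtain ⟨zk, hzk, ek⟩ := hcen (star k)
        have : k = zk * star k := by rw [← ek, hstar2]
        rw [this, h3]
        exact mul_LCenter hzk hzb
      · -- x = aj, y = bj
        have h1 : star a * b * k = star b * a := by
          apply lcancel (a := γ)
          rw [← gl, h]
        obtain ⟨za, hza, ea⟩ := hcen a
        obtain ⟨zb, hzb, eb⟩ := hcen b
        obtain ⟨ac, al, am, ar⟩ := (mem_LCenter za).mp hza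
        set u : L := Loop.ldiv za zb with hu
        have hzu : u ∈ LCenter L := ldiv_LCenter hza hzb
        obtain ⟨uc, ul, um, ur⟩ := (mem_LCenter u).mp hzu
        have h2 : za * (a * b * k) = za * (u * (b * a)) := by
          calc za * (a * b * k) = za * (a * b) * k := (al _ k).symm
            _ = za * a * b * k := by rw [al a b]
            _ = star a * b * k := by rw [← ea]
            _ = star b * a := h1
            _ = zb * b * a := by rw [eb]
            _ = zb * (b * a) := ((mem_LCenter zb).mp hzb).2.1 b a
            _ = za * u * (b * a) := by rw [Loop.mul_ldiv]
            _ = za * (u * (b * a)) := al u _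
        have h3 : a * b * k = u * (b * a) := lcancel h2
        set c : L := Loop.ldiv (b * a) (a * b) with hc
        have hcc : c ∈ LCenter L := commL_LCenter hanti hcen (Loop.mul_ldiv (b*a) (a*b))
        obtain ⟨cc, cl, cm, cr⟩ := (mem_LCenter c).mp hcc
        have h4 : b * a * (c * k) = b * a * c * k := (cm (b*a) k).symm
        have h5 : b * a * (c * k) = b * a * u := by
          rw [h4, Loop.mul_ldiv, h3, uc (b*a)]
        have h6 : c * k = u := lcancel h5
        have h7 : k = Loop.ldiv c u := by rw [← h6, Loop.ldiv_mul]
        rw [h7]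
        exact ldiv_LCenter hcc hzu
end

section
/- Let (L,*) be a loop with involution and M = D(L,*,γ). Then all associators of M lie in Z(L) if and only if L is central-by-abelian (i.e., all commutators and associators of L are central in L). -/
universe u

-- ===== auxiliary lemmas =====
namespace CBA
variable {L : Type u} [Loop L]

lemma mul_lcancel {a b c : L} (h : a * b = a * c) : b = c := by
  have := congrArg (Loop.ldiv a) h
  rwa [Loop.ldiv_mul, Loop.ldiv_mul] at this

lemma ldiv_eq_iff {a b c : L} : Loop.ldiv a b = c ↔ b = a * c := by
  constructor
  · rintro rfl; exact (Loop.mul_ldiv a b).symm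
  · rintro rfl; exact Loop.ldiv_mul a c

lemma center_iff {c : L} : c ∈ LCenter L ↔
    (∀ x : L, c*x = x*c) ∧ (∀ x y : L, (c*x)*y = c*(x*y))
    ∧ (∀ x y : L, (x*c)*y = x*(c*y)) ∧ (∀ x y : L, (x*y)*c = x*(y*c)) := by
  constructor
  · rintro ⟨h1, ⟨h2, h3⟩, h4⟩; exact ⟨h1, h2, h3, h4⟩
  · rintro ⟨h1, h2, h3, h4⟩; exact ⟨h1, ⟨h2, h3⟩, h4⟩

lemma one_center : (1 : L) ∈ LCenter L := by
  rw [center_iff]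
  refine ⟨fun x => by rw [Loop.one_mul, Loop.mul_one],
    fun x y => by rw [Loop.one_mul, Loop.one_mul],
    fun x y => by rw [Loop.mul_one, Loop.one_mul],
    fun x y => by rw [Loop.mul_one, Loop.mul_one]⟩

lemma mul_center {z w : L} (hz : z ∈ LCenter L) (hw : w ∈ LCenter L) :
    z * w ∈ LCenter L := by
  rw [center_iff] at hz hw ⊢
  obtain ⟨zc, zl, zm, zr⟩ := hz
  obtain ⟨wc, wl, wm, wr⟩ := hw
  refine ⟨fun x => ?_, fun x y => ?_, fun x y => ?_, fun x y => ?_⟩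
  · calc (z*w)*x = z*(w*x) := zl w x
      _ = z*(x*w) := by rw [wc]
      _ = (z*x)*w := (wr z x).symm
      _ = (x*z)*w := by rw [zc]
      _ = x*(z*w) := wr x z
  · calc ((z*w)*x)*y = (z*(w*x))*y := by rw [zl]
      _ = z*((w*x)*y) := zl (w*x) y
      _ = z*(w*(x*y)) := by rw [wl]
      _ = (z*w)*(x*y) := (zl w (x*y)).symm
  · calc (x*(z*w))*y = ((x*z)*w)*y := by rw [wr]
      _ = (x*z)*(w*y) := wm (x*z) y
      _ = x*(z*(w*y)) := zm x (w*y)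
      _ = x*((z*w)*y) := by rw [zl]
  · calc (x*y)*(z*w) = ((x*y)*z)*w := (wr (x*y) z).symm
      _ = (x*(y*z))*w := by rw [zr]
      _ = x*((y*z)*w) := wr x (y*z)
      _ = x*(y*(z*w)) := by rw [wr]
end CBA

namespace CBA
variable {L : Type u} [Loop L]

/-- The (two-sided) inverse of a central element is central. -/
lemma inv_center {z : L} (hz : z ∈ LCenter L) :
    ∃ w ∈ LCenter L, z * w = 1 ∧ w * z = 1 := by
  obtain ⟨zc, zl, zm, zr⟩ := center_iff.mp hz
  set w := Loop.ldiv z 1 with hw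
  have hzw : z * w = 1 := Loop.mul_ldiv z 1
  have hwz : w * z = 1 := by rw [← zc w]; exact hzw
  have wc : ∀ x : L, w * x = x * w := by
    intro x
    apply mul_lcancel (a := z)
    calc z * (w * x) = (z * w) * x := (zl w x).symm
      _ = x := by rw [hzw, Loop.one_mul]
      _ = x * (z * w) := by rw [hzw, Loop.mul_one]
      _ = (x * z) * w := (zm x w).symm
      _ = (z * x) * w := by rw [zc]
      _ = z * (x * w) := zl x w
  have wl : ∀ x y : L, (w * x) * y = w * (x * y) := by
    intro x y
    apply mul_lcancel (a := z)
    calc z * ((w * x) * y) = (z * (w * x)) * y := (zl (w*x) y).symm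
      _ = ((z * w) * x) * y := by rw [zl w x]
      _ = x * y := by rw [hzw, Loop.one_mul]
      _ = (z * w) * (x * y) := by rw [hzw, Loop.one_mul]
      _ = z * (w * (x * y)) := zl w (x*y)
  have wr : ∀ x y : L, (x * y) * w = x * (y * w) := by
    intro x y
    apply mul_lcancel (a := z)
    calc z * ((x * y) * w) = ((x * y) * w) * z := zc _
      _ = (x * y) * (w * z) := zr (x*y) w
      _ = x * y := by rw [hwz, Loop.mul_one]
      _ = x * (y * (w * z)) := by rw [hwz, Loop.mul_one]
      _ = x * ((y * w) * z) := by rw [zr y w]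
      _ = (x * (y * w)) * z := (zr x (y*w)).symm
      _ = z * (x * (y * w)) := (zc _).symm
  have wm : ∀ x y : L, (x * w) * y = x * (w * y) := by
    intro x y
    calc (x * w) * y = (w * x) * y := by rw [wc]
      _ = w * (x * y) := wl x y
      _ = (x * y) * w := wc _
      _ = x * (y * w) := wr x y
      _ = x * (w * y) := by rw [wc]
  exact ⟨w, center_iff.mpr ⟨wc, wl, wm, wr⟩, hzw, hwz⟩

section Star
variable (star : L → L) (hstar2 : ∀ a : L, star (star a) = a)
  (hanti : ∀ a b : L, star (a * b) = star b * star a)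

include hstar2 hanti in
lemma star_center {z : L} (hz : z ∈ LCenter L) : star z ∈ LCenter L := by
  obtain ⟨zc, zl, zm, zr⟩ := center_iff.mp hz
  have sc : ∀ x : L, star z * x = x * star z := by
    intro x
    calc star z * x = star z * star (star x) := by rw [hstar2]
      _ = star (star x * z) := (hanti _ _).symm
      _ = star (z * star x) := by rw [zc]
      _ = star (star x) * star z := hanti _ _
      _ = x * star z := by rw [hstar2]
  have sl : ∀ x y : L, (star z * x) * y = star z * (x * y) := by
    intro x y
    calc (star z * x) * y = (star z * star (star x)) * star (star y) := by
          rw [hstar2, hstar2]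
      _ = star (star x * z) * star (star y) := by rw [hanti]
      _ = star (star y * (star x * z)) := (hanti _ _).symm
      _ = star ((star y * star x) * z) := by rw [zr]
      _ = star z * star (star y * star x) := hanti _ _
      _ = star z * star (star (x * y)) := by rw [hanti x y]
      _ = star z * (x * y) := by rw [hstar2]
  have sr : ∀ x y : L, (x * y) * star z = x * (y * star z) := by
    intro x y
    calc (x * y) * star z = star (star (x*y)) * star z := by rw [hstar2]
      _ = star (z * star (x * y)) := (hanti _ _).symm
      _ = star (z * (star y * star x)) := by rw [hanti x y]
      _ = star ((z * star y) * star x) := by rw [zl]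
      _ = star (star x) * star (z * star y) := hanti _ _
      _ = x * (star (star y) * star z) := by rw [hstar2, hanti]
      _ = x * (y * star z) := by rw [hstar2]
  have sm : ∀ x y : L, (x * star z) * y = x * (star z * y) := by
    intro x y
    calc (x * star z) * y = (star z * x) * y := by rw [sc]
      _ = star z * (x * y) := sl x y
      _ = (x * y) * star z := sc _
      _ = x * (y * star z) := sr x y
      _ = x * (star z * y) := by rw [sc]
  exact center_iff.mpr ⟨sc, sl, sm, sr⟩
end Star

end CBA

namespace CBA
variable {L : Type u} [Loop L]

/-- `a ≡ b` modulo the center. -/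
def req (a b : L) : Prop := ∃ z ∈ LCenter L, b = a * z

lemma rz {z : L} (hz : z ∈ LCenter L) (a : L) : req a (a * z) := ⟨z, hz, rfl⟩

lemma rzl {z : L} (hz : z ∈ LCenter L) (a : L) : req a (z * a) :=
  ⟨z, hz, (center_iff.mp hz).1 a⟩

lemma rrefl (a : L) : req a a := ⟨1, one_center, (Loop.mul_one a).symm⟩

lemma rsymm {a b : L} (h : req a b) : req b a := by
  obtain ⟨z, hz, rfl⟩ := h
  obtain ⟨w, hw, hzw, -⟩ := inv_center hz
  refine ⟨w, hw, ?_⟩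
  rw [(center_iff.mp hz).2.2.1 a w, hzw, Loop.mul_one]

lemma rtrans {a b c : L} (h1 : req a b) (h2 : req b c) : req a c := by
  obtain ⟨z, hz, rfl⟩ := h1
  obtain ⟨w, hw, rfl⟩ := h2
  exact ⟨z * w, mul_center hz hw, (center_iff.mp hz).2.2.1 a w⟩

lemma rmul_left (a : L) {b b' : L} (h : req b b') : req (a * b) (a * b') := by
  obtain ⟨z, hz, rfl⟩ := h
  exact ⟨z, hz, ((center_iff.mp hz).2.2.2 a b).symm⟩

lemma rmul_right (b : L) {a a' : L} (h : req a a') : req (a * b) (a' * b) := by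
  obtain ⟨z, hz, rfl⟩ := h
  obtain ⟨zc, zl, zm, zr⟩ := center_iff.mp hz
  refine ⟨z, hz, ?_⟩
  rw [zm a b, zc b, ← zr a b]

section hyp
variable (hcomm : ∀ a b : L, Loop.comm a b ∈ LCenter L)
variable (hassoc : ∀ a b c : L, Loop.assoc a b c ∈ LCenter L)

include hcomm in
lemma rcomm (a b : L) : req (a * b) (b * a) :=
  ⟨Loop.comm b a, hcomm b a, (Loop.mul_ldiv _ _).symm⟩

include hassoc in
lemma rassoc (a b c : L) : req (a * (b * c)) ((a * b) * c) :=
  ⟨Loop.assoc a b c, hassoc a b c, (Loop.mul_ldiv _ _).symm⟩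
end hyp

lemma key {A B d : L} (hAB : req A B) (h : A * d = B) : d ∈ LCenter L := by
  obtain ⟨z, hz, rfl⟩ := hAB
  rwa [mul_lcancel h]

lemma keyStar (star : L → L) (hstar2 : ∀ a : L, star (star a) = a)
    (hanti : ∀ a b : L, star (a * b) = star b * star a)
    {A B d : L} (hAB : req A B) (h : A * star d = B) : d ∈ LCenter L := by
  have : star d ∈ LCenter L := key hAB h
  have := star_center star hstar2 hanti this
  rwa [hstar2] at this

end CBA

/-- All associators of `M = D(L,*,γ)` lie in `Z(L)` iff `L` is
central-by-abelian. -/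
theorem stmt17 {L : Type u} [Loop L] (star : L → L)
    (hstar2 : ∀ a : L, star (star a) = a)
    (hanti : ∀ a b : L, star (a * b) = star b * star a)
    (γ : L) (hγ : γ ∈ LCenter L) :
    (∀ (x y z : L × Bool) (k : L × Bool),
        CDmul star γ (CDmul star γ x (CDmul star γ y z)) k
          = CDmul star γ (CDmul star γ x y) z →
        ∃ c ∈ LCenter L, k = (c, false)) ↔
      ((∀ a b : L, Loop.comm a b ∈ LCenter L) ∧
       (∀ a b c : L, Loop.assoc a b c ∈ LCenter L)) := by
  have hγs : star γ ∈ LCenter L := CBA.star_center star hstar2 hanti hγ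
  constructor
  · intro H
    constructor
    · intro a b
      have h : CDmul star γ (CDmul star γ (a, false)
            (CDmul star γ (b, false) (1, true))) (star (Loop.comm a b), false)
          = CDmul star γ (CDmul star γ (a, false) (b, false)) (1, true) := by
        simp only [CDmul, Loop.one_mul, hstar2]
        exact Prod.ext (Loop.mul_ldiv (b * a) (a * b)) rfl
      obtain ⟨c, hc, hck⟩ := H _ _ _ _ h
      have : star (Loop.comm a b) = c := (Prod.mk.injEq _ _ _ _).mp hck |>.1
      have := CBA.star_center star hstar2 hanti (this ▸ hc)
      rwa [hstar2] at this
    · intro a b c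
      have h : CDmul star γ (CDmul star γ (a, false)
            (CDmul star γ (b, false) (c, false))) (Loop.assoc a b c, false)
          = CDmul star γ (CDmul star γ (a, false) (b, false)) (c, false) := by
        simp only [CDmul]
        exact Prod.ext (Loop.mul_ldiv (a * (b * c)) ((a * b) * c)) rfl
      obtain ⟨c', hc', hck⟩ := H _ _ _ _ h
      have : Loop.assoc a b c = c' := (Prod.mk.injEq _ _ _ _).mp hck |>.1
      exact this ▸ hc'
  · rintro ⟨hcomm, hassoc⟩
    have rc := CBA.rcomm (L := L) hcomm
    have ra := CBA.rassoc (L := L) hassoc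
    intro x y z k
    obtain ⟨a, _ | _⟩ := x <;> obtain ⟨b, _ | _⟩ := y <;>
      obtain ⟨c, _ | _⟩ := z <;> obtain ⟨d, _ | _⟩ := k <;>
      intro h <;> simp only [CDmul, Prod.mk.injEq, and_true, and_false,
        Bool.true_eq_false, Bool.false_eq_true] at h <;>
      try exact absurd h (by simp)
    -- 8 remaining cases
    · -- (f,f,f)
      exact ⟨d, CBA.key (ra a b c) h, rfl⟩
    · -- (f,f,t)
      exact ⟨d, CBA.keyStar star hstar2 hanti
        (CBA.rtrans (CBA.rsymm (ra c b a)) (CBA.rmul_left c (rc b a))) h, rfl⟩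
    · -- (f,t,f)
      exact ⟨d, CBA.keyStar star hstar2 hanti
        (CBA.rtrans (CBA.rsymm (ra b (star c) a))
          (CBA.rtrans (CBA.rmul_left b (rc (star c) a)) (ra b a (star c)))) h, rfl⟩
    · -- (f,t,t)
      exact ⟨d, CBA.key
        (CBA.rtrans (rc a (γ * (star c * b)))
          (CBA.rtrans (CBA.rsymm (ra γ (star c * b) a))
            (CBA.rmul_left γ (CBA.rsymm (ra (star c) b a))))) h, rfl⟩
    · -- (t,f,f)
      rw [hanti b c] at h
      exact ⟨d, CBA.keyStar star hstar2 hanti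
        (CBA.rtrans (CBA.rmul_left a (rc (star c) (star b)))
          (ra a (star b) (star c))) h, rfl⟩
    · -- (t,f,t)
      rw [hanti c b] at h
      exact ⟨d, CBA.key
        (CBA.rmul_left γ (CBA.rtrans (CBA.rsymm (ra (star b) (star c) a))
          (CBA.rtrans (rc (star b) (star c * a)) (CBA.rsymm (ra (star c) a (star b)))))) h, rfl⟩
    · -- (t,t,f)
      rw [hanti b (star c), hstar2 c] at h
      exact ⟨d, CBA.key
        (CBA.rtrans (CBA.rmul_left γ (CBA.rsymm (ra c (star b) a)))
          (CBA.rtrans (CBA.rmul_left γ (rc c (star b * a))) (ra γ (star b * a) c))) h, rfl⟩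
    · -- (t,t,t)
      rw [hanti γ (star c * b), hanti (star c) b, hstar2 c] at h
      exact ⟨d, CBA.keyStar star hstar2 hanti
        (CBA.rtrans (ra a (star b * c) (star γ))
          (CBA.rtrans (CBA.rsymm (CBA.rz hγs (a * (star b * c))))
            (CBA.rtrans (rc a (star b * c))
              (CBA.rtrans (CBA.rsymm (ra (star b) c a))
                (CBA.rtrans (rc (star b) (c * a))
                  (CBA.rtrans (CBA.rsymm (ra c a (star b)))
                    (CBA.rtrans (CBA.rmul_left c (rc a (star b)))
                      (CBA.rmul_left c (CBA.rzl hγ (star b * a)))))))))) h, rfl⟩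
end

section
/- For a loop L with involution, any two of the following three properties imply the third: (1) the involution is central (a^* ∈ Z(L)a for all a); (2) the involution is normal (a^*a ∈ Z(L) for all a); (3) every square a² is central. -/
universe u

section Aux
variable {L : Type u} [Loop L]

lemma mem_center_iff (a : L) : a ∈ LCenter L ↔
    (∀ x, a*x = x*a) ∧ (∀ x y, (a*x)*y = a*(x*y)) ∧
    (∀ x y, (x*a)*y = x*(a*y)) ∧ (∀ x y, (x*y)*a = x*(y*a)) := by
  constructor
  · rintro ⟨hc, ⟨hl, hm⟩, hr⟩; exact ⟨hc, hl, hm, hr⟩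
  · rintro ⟨hc, hl, hm, hr⟩; exact ⟨hc, ⟨hl, hm⟩, hr⟩

lemma center_mul {z w : L} (hz : z ∈ LCenter L) (hw : w ∈ LCenter L) :
    z * w ∈ LCenter L := by
  rw [mem_center_iff] at hz hw ⊢
  obtain ⟨zc, zl, zm, zr⟩ := hz
  obtain ⟨wc, wl, wm, wr⟩ := hw
  refine ⟨?_, ?_, ?_, ?_⟩
  · intro x
    rw [zl, wc x, ← zl x w, zc x, zm]
  · intro x y
    rw [zl, zl, wl, ← zl]
  · intro x y
    rw [← zm, wm, zm, ← zl]
  · intro x y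
    rw [← zm (x*y) w, zr, wr, zm]

lemma center_inv {z : L} (hz : z ∈ LCenter L) :
    Loop.ldiv z 1 ∈ LCenter L := by
  rw [mem_center_iff] at hz
  obtain ⟨zc, zl, zm, zr⟩ := hz
  set i := Loop.ldiv z 1 with hi
  have hzi : z * i = 1 := Loop.mul_ldiv z 1
  -- left-cancel by z
  have lcan : ∀ a b : L, z * a = z * b → a = b := by
    intro a b h
    have := congrArg (Loop.ldiv z) h
    rwa [Loop.ldiv_mul, Loop.ldiv_mul] at this
  have icomm : ∀ x : L, i * x = x * i := by
    intro x
    apply lcan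
    rw [← zl, hzi, Loop.one_mul, ← zl, zc x, zm, hzi, Loop.mul_one]
  rw [mem_center_iff]
  refine ⟨icomm, ?_, ?_, ?_⟩
  · intro x y
    apply lcan
    rw [← zl, ← zl i x, hzi, Loop.one_mul, ← zl, hzi, Loop.one_mul]
  · intro x y
    obtain ⟨u, hu⟩ : ∃ u : L, u * z = x := ⟨Loop.rdiv x z, Loop.rdiv_mul z x⟩
    have h1 : x * i = u := by rw [← hu, zm, hzi, Loop.mul_one]
    rw [h1, ← hu, zm, ← zl, hzi, Loop.one_mul]
  · intro x y
    obtain ⟨u, hu⟩ : ∃ u : L, u * z = y := ⟨Loop.rdiv y z, Loop.rdiv_mul z y⟩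
    have h1 : y * i = u := by rw [← hu, zm, hzi, Loop.mul_one]
    rw [h1, ← hu, ← zr x u, zm, hzi, Loop.mul_one]

lemma center_cancel {z w : L} (hz : z ∈ LCenter L) (hzw : z * w ∈ LCenter L) :
    w ∈ LCenter L := by
  have hi := center_inv hz
  have hzi : z * Loop.ldiv z 1 = 1 := Loop.mul_ldiv z 1
  have hzl := ((mem_center_iff z).1 hz).2.1
  have h : Loop.ldiv z 1 * (z * w) = w := by
    have hic := ((mem_center_iff _).1 hi).1
    rw [← ((mem_center_iff _).1 hi).2.1, hic z, hzi, Loop.one_mul]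
  have := center_mul hi hzw
  rwa [h] at this

end Aux

/-- For a loop with involution, any two of the following imply the third:
the involution is central, the involution is normal, every square is central. -/
theorem stmt19 {L : Type u} [Loop L] (star : L → L)
    (hstar2 : ∀ a : L, star (star a) = a)
    (hanti : ∀ a b : L, star (a * b) = star b * star a) :
    (((∀ a : L, ∃ z ∈ LCenter L, star a = z * a) ∧
        (∀ a : L, star a * a ∈ LCenter L)) → (∀ a : L, a * a ∈ LCenter L)) ∧
    (((∀ a : L, ∃ z ∈ LCenter L, star a = z * a) ∧
        (∀ a : L, a * a ∈ LCenter L)) → (∀ a : L, star a * a ∈ LCenter L)) ∧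
    (((∀ a : L, star a * a ∈ LCenter L) ∧
        (∀ a : L, a * a ∈ LCenter L)) → (∀ a : L, ∃ z ∈ LCenter L, star a = z * a)) := by
  have rcan : ∀ a x y : L, x * a = y * a → x = y := by
    intro a x y h
    have := congrArg (fun t => Loop.rdiv t a) h
    simpa [Loop.mul_rdiv] using this
  refine ⟨?_, ?_, ?_⟩
  · rintro ⟨h1, h2⟩ a
    obtain ⟨z, hz, hza⟩ := h1 a
    have hzl := ((mem_center_iff z).1 hz).2.1
    have : z * (a * a) ∈ LCenter L := by
      rw [← hzl, ← hza]; exact h2 a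
    exact center_cancel hz this
  · rintro ⟨h1, h3⟩ a
    obtain ⟨z, hz, hza⟩ := h1 a
    have hzl := ((mem_center_iff z).1 hz).2.1
    rw [hza, hzl]
    exact center_mul hz (h3 a)
  · rintro ⟨h2, h3⟩ a
    have hc := h2 a
    have hd := h3 a
    have hi := center_inv hd
    set i := Loop.ldiv (a*a) 1 with hidef
    have hdi : (a*a) * i = 1 := Loop.mul_ldiv _ 1
    refine ⟨star a * a * i, center_mul hc hi, ?_⟩
    apply rcan a
    have hzl := ((mem_center_iff _).1 (center_mul hc hi)).2.1
    rw [hzl]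
    have hcl := ((mem_center_iff _).1 hc).2.1
    have hic := ((mem_center_iff _).1 hi).1
    rw [hcl, hic, hdi, Loop.mul_one]
end
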